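/- Let z be a complex number with |z| = 1 and z ≠ 1. Then limsup_{n→∞} |z^n − 1| ≥ |e^{2πi/3} − 1| = √3. -/

import Mathlib

open Filter Real Complex

lemma aux_cos_le {x : ℝ} (h1 : 2*π/3 ≤ x) (h2 : x ≤ 4*π/3) : Real.cos x ≤ -(1/2) := by
  have hc : Real.cos (2*π/3) = -(1/2) := by
    have h : (2*π/3 : ℝ) = π - π/3 := by ring
    rw [h, Real.cos_pi_sub, Real.cos_pi_div_three]
  have hπ : (0:ℝ) < π := Real.pi_pos
  rcases le_or_gt x π with h | h
  · have := Real.cos_le_cos_of_nonneg_of_le_pi (by positivity) h h1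
    linarith [this]
  · have h3 : Real.cos (2*π - x) = Real.cos x := Real.cos_two_pi_sub x
    have := Real.cos_le_cos_of_nonneg_of_le_pi (by linarith) (by linarith)
      (show 2*π/3 ≤ 2*π - x by linarith)
    linarith [this]

lemma aux_key : ∀ N : ℕ, ∀ θ : ℝ, 0 < θ → θ ≤ π → 2*π/3 ≤ 2^N * θ →
    ∃ n : ℕ, 1 ≤ n ∧ Real.cos (n * θ) ≤ -(1/2) := by
  intro N
  induction N with
  | zero =>
    intro θ h0 hπ hN
    exact ⟨1, le_refl 1, by
      push_cast
      rw [one_mul]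
      exact aux_cos_le (by linarith [hN]) (by linarith [Real.pi_pos])⟩
  | succ N ih =>
    intro θ h0 hπ hN
    have hπ0 : (0:ℝ) < π := Real.pi_pos
    rcases le_or_gt (2*π/3) θ with h | h
    · exact ⟨1, le_refl 1, by
        push_cast; rw [one_mul]; exact aux_cos_le h (by linarith)⟩
    · rcases le_or_gt (2*θ) π with h2 | h2
      · obtain ⟨n, hn1, hn2⟩ := ih (2*θ) (by linarith) h2 (by
          have : (2:ℝ)^(N+1) * θ = 2^N * (2*θ) := by ring
          linarith [hN, this.symm.le])
        refine ⟨2*n, by omega, ?_⟩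
        have : ((2*n : ℕ) : ℝ) * θ = (n : ℝ) * (2*θ) := by push_cast; ring
        rw [this]; exact hn2
      · refine ⟨2, by omega, ?_⟩
        have : ((2:ℕ):ℝ) * θ = 2*θ := by push_cast; ring
        rw [this]
        exact aux_cos_le (by linarith) (by linarith)

lemma aux_exists (w : ℂ) (hw : ‖w‖ = 1) (hw1 : w ≠ 1) :
    ∃ n : ℕ, 1 ≤ n ∧ Real.sqrt 3 ≤ ‖w ^ n - 1‖ := by
  have hπ0 : (0:ℝ) < π := Real.pi_pos
  set θ := Complex.arg w with hθ
  have hwe : w = Complex.exp (θ * Complex.I) := by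
    have := Complex.norm_mul_exp_arg_mul_I w
    rw [hw] at this; simpa using this.symm
  have hθ0 : θ ≠ 0 := by
    intro h
    apply hw1
    rw [hwe, h]; simp
  have habs : |θ| ≤ π := Complex.abs_arg_le_pi w
  have habs0 : 0 < |θ| := abs_pos.mpr hθ0
  obtain ⟨N, hNlt⟩ := pow_unbounded_of_one_lt ((2*π/3) / |θ|) (show (1:ℝ) < 2 by norm_num)
  have hN : 2*π/3 ≤ 2^N * |θ| := by
    rw [div_lt_iff₀ habs0] at hNlt
    linarith
  obtain ⟨n, hn1, hn2⟩ := aux_key N |θ| habs0 habs hN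
  refine ⟨n, hn1, ?_⟩
  have hre : (w ^ n).re = Real.cos (n * θ) := by
    rw [hwe, ← Complex.exp_nat_mul]
    have : ((n : ℂ) * (θ * Complex.I)) = ((n * θ : ℝ) : ℂ) * Complex.I := by push_cast; ring
    rw [this, Complex.exp_ofReal_mul_I_re]
  have hcos : Real.cos (n * θ) ≤ -(1/2) := by
    rcases abs_cases θ with ⟨he, _⟩ | ⟨he, _⟩
    · rwa [he] at hn2
    · rw [he] at hn2
      rw [show ((n:ℝ) * θ) = -((n:ℝ) * -θ) by ring, Real.cos_neg]
      exact hn2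
  have habsn : ‖w ^ n‖ = 1 := by rw [norm_pow, hw, one_pow]
  have hsq : ‖w ^ n - 1‖ ^ 2 = 2 - 2 * (w^n).re := by
    rw [Complex.sq_norm]
    rw [Complex.normSq_sub]
    rw [← Complex.sq_norm (w^n), habsn]
    simp
    norm_num
  have h3 : (3:ℝ) ≤ ‖w ^ n - 1‖ ^ 2 := by
    rw [hsq, hre]; linarith
  calc Real.sqrt 3 ≤ Real.sqrt (‖w ^ n - 1‖ ^ 2) := Real.sqrt_le_sqrt h3
    _ = ‖w ^ n - 1‖ := by
        rw [Real.sqrt_sq (norm_nonneg _)]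

theorem stmt_0 (z : ℂ) (hz : ‖z‖ = 1) (hz1 : z ≠ 1) :
    ‖Complex.exp (2 * Real.pi * Complex.I / 3) - 1‖ ≤
      Filter.limsup (fun n : ℕ => ‖z ^ n - 1‖) Filter.atTop ∧
    ‖Complex.exp (2 * Real.pi * Complex.I / 3) - 1‖ = Real.sqrt 3 := by
  have hπ0 : (0:ℝ) < π := Real.pi_pos
  have heq : ‖Complex.exp (2 * Real.pi * Complex.I / 3) - 1‖ = Real.sqrt 3 := by
    have h1 : (2 * (Real.pi:ℂ) * Complex.I / 3) = ((2*π/3 : ℝ) : ℂ) * Complex.I := by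
      push_cast; ring
    rw [h1]
    have hre : (Complex.exp (((2*π/3 : ℝ) : ℂ) * Complex.I)).re = Real.cos (2*π/3) :=
      Complex.exp_ofReal_mul_I_re _
    have habs : ‖Complex.exp (((2*π/3 : ℝ) : ℂ) * Complex.I)‖ = 1 :=
      Complex.norm_exp_ofReal_mul_I _
    have hc : Real.cos (2*π/3) = -(1/2) := by
      have h : (2*π/3 : ℝ) = π - π/3 := by ring
      rw [h, Real.cos_pi_sub, Real.cos_pi_div_three]
    have hsq : ‖Complex.exp (((2*π/3 : ℝ) : ℂ) * Complex.I) - 1‖ ^ 2 = 3 := by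
      rw [Complex.sq_norm, Complex.normSq_sub,
        ← Complex.sq_norm (Complex.exp (((2*π/3 : ℝ) : ℂ) * Complex.I)), habs]
      simp only [map_one, mul_one, one_pow, Complex.normSq_one]
      rw [hre, hc]
      norm_num
    rw [← Real.sqrt_sq (norm_nonneg (Complex.exp (((2*π/3 : ℝ) : ℂ) * Complex.I) - 1)), hsq]
  refine ⟨?_, heq⟩
  rw [heq]
  apply Filter.le_limsup_of_frequently_le
  · rw [Filter.frequently_atTop]
    intro m
    by_cases hm : z ^ (m+1) = 1
    · obtain ⟨k, hk1, hk2⟩ := aux_exists z hz hz1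
      refine ⟨k + (m+1) * m, by nlinarith, ?_⟩
      have : z ^ (k + (m+1) * m) = z ^ k := by
        rw [pow_add, pow_mul, hm, one_pow, mul_one]
      rw [this]; exact hk2
    · have habs : ‖z ^ (m+1)‖ = 1 := by rw [norm_pow, hz, one_pow]
      obtain ⟨k, hk1, hk2⟩ := aux_exists (z ^ (m+1)) habs hm
      refine ⟨(m+1) * k, by nlinarith, ?_⟩
      rw [← pow_mul] at hk2
      exact hk2
  · refine Filter.isBoundedUnder_of ⟨2, fun n => ?_⟩
    rw [sub_eq_add_neg]
    calc ‖z ^ n + -1‖ ≤ ‖z ^ n‖ + ‖(-1 : ℂ)‖ :=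
          norm_add_le _ _
      _ = 2 := by rw [norm_pow, hz, one_pow]; simp; norm_num
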